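/- With the Fock space operators a_i^- defined by the explicit action formulas on the basis of W_p, for all i < j the annihilation operators q-supercommute: a_i^- a_j^- - (-1)^{θ_i θ_j} q · a_j^- a_i^- = 0 as operators on W_p. -/
import Mathlib


noncomputable section

/-- q-integer [x] = (q^x - q^{-x})/(q - q^{-1}). -/
def qb (q : ℝ) (x : ℤ) : ℝ := (q ^ x - q ^ (-x)) / (q - q⁻¹)

/-- q-factorial [x]! = [1][2]⋯[x]. -/
def qfact (q : ℝ) (x : ℕ) : ℝ := ∏ k ∈ Finset.Icc 1 x, qb q (k : ℤ)

/-- Free module on all tuples; the Fock space W_p is spanned by valid tuples. -/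
abbrev Wp (N : ℕ) := (Fin N → ℕ) →₀ ℝ

/-- θ grading: 0 for the first n (bosonic) indices, 1 for the rest (fermionic). -/
def th (n : ℕ) {N : ℕ} (i : Fin N) : ℕ := if (i : ℕ) < n then 0 else 1

/-- valid tuples: fermionic entries ≤ 1 and total sum ≤ p. -/
def valid (n : ℕ) {N : ℕ} (p : ℕ) (r : Fin N → ℕ) : Prop :=
  (∀ i : Fin N, n ≤ (i : ℕ) → r i ≤ 1) ∧ ∑ i, r i ≤ p

/-- sign (-1)^{θ_i (θ_1 r_1 + ⋯ + θ_{i-1} r_{i-1})}. -/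
def sgn (n : ℕ) {N : ℕ} (i : Fin N) (r : Fin N → ℕ) : ℝ :=
  (-1 : ℝ) ^ (th n i * ∑ j ∈ Finset.univ.filter (fun j : Fin N => j < i), th n j * r j)

/-- r_1 + ⋯ + r_{i-1}. -/
def Ssum {N : ℕ} (i : Fin N) (r : Fin N → ℕ) : ℕ :=
  ∑ j ∈ Finset.univ.filter (fun j : Fin N => j < i), r j

/-- creation operator a_i^+. -/
def aP (n : ℕ) {N : ℕ} (p : ℕ) (q : ℝ) (i : Fin N) : Wp N →ₗ[ℝ] Wp N :=
  Finsupp.lift (Wp N) ℝ (Fin N → ℕ) fun r =>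
    (sgn n i r * q ^ (-(Ssum i r : ℤ)) * (1 - (th n i : ℝ) * (r i : ℝ)) *
      Real.sqrt (qb q ((r i : ℤ) + 1) * qb q ((p : ℤ) - ∑ l, (r l : ℤ)))) •
      Finsupp.single (Function.update r i (r i + 1)) 1

/-- annihilation operator a_i^-. -/
def aM (n : ℕ) {N : ℕ} (p : ℕ) (q : ℝ) (i : Fin N) : Wp N →ₗ[ℝ] Wp N :=
  Finsupp.lift (Wp N) ℝ (Fin N → ℕ) fun r =>
    (sgn n i r * q ^ ((Ssum i r : ℤ)) *
      Real.sqrt (qb q (r i : ℤ) * qb q ((p : ℤ) - ∑ l, (r l : ℤ) + 1))) •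
      Finsupp.single (Function.update r i (r i - 1)) 1

/-- Cartan operator H_i, diagonal on the basis. -/
def Hop (n : ℕ) {N : ℕ} (p : ℕ) (i : Fin N) : Wp N →ₗ[ℝ] Wp N :=
  Finsupp.lift (Wp N) ℝ (Fin N → ℕ) fun r =>
    ((p : ℝ) - (-1 : ℝ) ^ th n i * (r i : ℝ) - ∑ j, (r j : ℝ)) • Finsupp.single r 1

lemma qb_zero' (q : ℝ) : qb q 0 = 0 := by simp [qb]

lemma qb_nonneg' {q : ℝ} (hq : 0 < q) (hq1 : q ≠ 1) {x : ℤ} (hx : 0 ≤ x) : 0 ≤ qb q x := by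
  rw [qb, div_nonneg_iff]
  rcases lt_or_gt_of_ne hq1 with h | h
  · right
    constructor
    · have : q ^ x ≤ q ^ (-x) := zpow_le_zpow_right_of_le_one₀ hq h.le (by linarith)
      linarith
    · have : 1 ≤ q⁻¹ := one_le_inv_iff₀.mpr ⟨hq, h.le⟩
      linarith
  · left
    constructor
    · have : q ^ (-x) ≤ q ^ x := zpow_le_zpow_right₀ h.le (by linarith)
      linarith
    · have : q⁻¹ ≤ 1 := by rw [inv_le_one_iff₀]; right; linarith
      linarith

lemma aM_single (n p : ℕ) {N : ℕ} (q : ℝ) (i : Fin N) (r : Fin N → ℕ) :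
    aM n p q i (Finsupp.single r 1) =
      (sgn n i r * q ^ ((Ssum i r : ℤ)) *
        Real.sqrt (qb q (r i : ℤ) * qb q ((p : ℤ) - ∑ l, (r l : ℤ) + 1))) •
        Finsupp.single (Function.update r i (r i - 1)) 1 := by
  simp [aM, Finsupp.lift_apply, Finsupp.sum_single_index]

lemma sum_comp_update {N : ℕ} {M : Type*} [AddCommMonoid M] (s : Finset (Fin N))
    (g : Fin N → ℕ → M) (r : Fin N → ℕ) (i : Fin N) (hi : i ∈ s) (v : ℕ) :
    ∑ k ∈ s, g k (Function.update r i v k) = g i v + ∑ k ∈ s \ {i}, g k (r k) := by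
  have h : (fun k => g k (Function.update r i v k)) =
      Function.update (fun k => g k (r k)) i (g i v) := by
    funext k
    by_cases h : k = i
    · subst h; simp
    · simp [Function.update_of_ne h]
  rw [h, Finset.sum_update_of_mem hi]

lemma sum_split {N : ℕ} {M : Type*} [AddCommMonoid M] (s : Finset (Fin N))
    (g : Fin N → ℕ → M) (r : Fin N → ℕ) (i : Fin N) (hi : i ∈ s) :
    ∑ k ∈ s, g k (r k) = g i (r i) + ∑ k ∈ s \ {i}, g k (r k) := by
  rw [← sum_comp_update s g r i hi (r i)]
  simp

/-- The annihilation operators q-supercommute: for i < j,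
a_i^- a_j^- - (-1)^{θ_i θ_j} q · a_j^- a_i^- = 0 on W_p. -/
theorem annihilation_q_supercommute (n m p : ℕ) (hn : 1 ≤ n) (hm : 1 ≤ m) (hp : 1 ≤ p)
    (q : ℝ) (hq : 0 < q) (hq1 : q ≠ 1) (i j : Fin (n + m)) (hij : i < j)
    (r : Fin (n + m) → ℕ) (hr : valid n p r) :
    aM n p q i (aM n p q j (Finsupp.single r 1)) -
        ((-1 : ℝ) ^ (th n i * th n j) * q) •
          aM n p q j (aM n p q i (Finsupp.single r 1)) = 0 := by
  have hq0 : q ≠ 0 := ne_of_gt hq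
  have hijne : i ≠ j := ne_of_lt hij
  have hjine : j ≠ i := ne_of_gt hij
  set r1 := Function.update r j (r j - 1) with hr1def
  set r2 := Function.update r i (r i - 1) with hr2def
  have hr1i : r1 i = r i := Function.update_of_ne hijne _ r
  have hr2j : r2 j = r j := Function.update_of_ne hjine _ r
  rw [aM_single n p q j r, map_smul, aM_single n p q i r1,
      aM_single n p q i r, map_smul, aM_single n p q j r2]
  have hcomm : Function.update r1 i (r1 i - 1) = Function.update r2 j (r2 j - 1) := by
    rw [hr1i, hr2j, hr1def, hr2def, Function.update_comm hijne]
  rw [hcomm, smul_smul, smul_smul, smul_smul, ← sub_smul]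
  rw [show (0 : Wp (n + m)) = (0 : ℝ) • Finsupp.single (Function.update r2 j (r2 j - 1)) (1:ℝ)
    from (zero_smul _ _).symm]
  congr 1
  -- now a pure scalar identity
  by_cases hj0 : r j = 0
  · simp [hj0, hr2j, qb_zero']
  by_cases hi0 : r i = 0
  · simp [hi0, hr1i, qb_zero']
  have hi1 : 1 ≤ r i := Nat.one_le_iff_ne_zero.mpr hi0
  have hj1 : 1 ≤ r j := Nat.one_le_iff_ne_zero.mpr hj0
  -- sums
  have hsum1 : ∑ l, (r1 l : ℤ) = (∑ l, (r l : ℤ)) - 1 := by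
    rw [hr1def, sum_comp_update Finset.univ (fun _ v => (v : ℤ)) r j (Finset.mem_univ j),
        sum_split Finset.univ (fun _ v => (v : ℤ)) r j (Finset.mem_univ j)]
    have : ((r j - 1 : ℕ) : ℤ) = (r j : ℤ) - 1 := by
      omega
    rw [this]; ring
  have hsum2 : ∑ l, (r2 l : ℤ) = (∑ l, (r l : ℤ)) - 1 := by
    rw [hr2def, sum_comp_update Finset.univ (fun _ v => (v : ℤ)) r i (Finset.mem_univ i),
        sum_split Finset.univ (fun _ v => (v : ℤ)) r i (Finset.mem_univ i)]
    have : ((r i - 1 : ℕ) : ℤ) = (r i : ℤ) - 1 := by omega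
    rw [this]; ring
  have htot : (∑ l, (r l : ℤ)) ≤ (p : ℤ) := by
    have h2 := hr.2
    calc (∑ l, (r l : ℤ)) = ((∑ l, r l : ℕ) : ℤ) := by push_cast; ring
    _ ≤ (p : ℤ) := by exact_mod_cast h2
  -- Ssum i r1 = Ssum i r, sgn n i r1 = sgn n i r
  have hfilt : ∀ k : Fin (n+m), k ∈ Finset.univ.filter (fun k : Fin (n+m) => k < i) → r1 k = r k := by
    intro k hk
    rw [Finset.mem_filter] at hk
    exact Function.update_of_ne (ne_of_lt (lt_trans hk.2 hij)) _ r
  have hSi : Ssum i r1 = Ssum i r := Finset.sum_congr rfl hfilt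
  have hsgni : sgn n i r1 = sgn n i r := by
    unfold sgn
    congr 1
    congr 1
    exact Finset.sum_congr rfl (fun k hk => by rw [hfilt k hk])
  -- j-side: i ∈ filter (< j)
  have hiS : i ∈ Finset.univ.filter (fun k : Fin (n+m) => k < j) := by
    simp [hij]
  have hSj : Ssum j r = Ssum j r2 + 1 := by
    unfold Ssum
    rw [hr2def, sum_comp_update _ (fun _ v => v) r i hiS,
        sum_split _ (fun _ v => v) r i hiS]
    omega
  have hE : th n j * ∑ k ∈ Finset.univ.filter (fun k : Fin (n+m) => k < j), th n k * r k
      = (th n j * ∑ k ∈ Finset.univ.filter (fun k : Fin (n+m) => k < j), th n k * r2 k)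
        + th n i * th n j := by
    rw [hr2def, sum_comp_update _ (fun k v => th n k * v) r i hiS,
        sum_split _ (fun k v => th n k * v) r i hiS]
    have : th n i * r i = th n i * (r i - 1) + th n i := by
      obtain ⟨c, hc⟩ := Nat.exists_eq_add_of_le hi1
      have hcc : 1 + c - 1 = c := by omega
      rw [hc, hcc]; ring
    rw [this]; ring
  have hsgnj : sgn n j r = sgn n j r2 * (-1 : ℝ) ^ (th n i * th n j) := by
    unfold sgn
    rw [hE, pow_add]
  have hq1exp : q ^ ((Ssum j r : ℤ)) = q ^ ((Ssum j r2 : ℤ)) * q := by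
    rw [hSj]
    push_cast
    rw [zpow_add_one₀ hq0]
  -- sqrt nonneg facts
  have hA : 0 ≤ qb q (r j : ℤ) := qb_nonneg' hq hq1 (by positivity)
  have hB : 0 ≤ qb q (r i : ℤ) := qb_nonneg' hq hq1 (by positivity)
  have hC : 0 ≤ qb q ((p : ℤ) - (∑ l, (r l : ℤ)) + 1) := qb_nonneg' hq hq1 (by linarith)
  have hD : 0 ≤ qb q ((p : ℤ) - (∑ l, (r l : ℤ)) + 2) := qb_nonneg' hq hq1 (by linarith)
  rw [hr1i, hr2j, hSi, hsgni, hsgnj, hq1exp, hsum1, hsum2]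
  have e1 : (p : ℤ) - ((∑ l, (r l : ℤ)) - 1) + 1 = (p : ℤ) - (∑ l, (r l : ℤ)) + 2 := by ring
  rw [e1]
  rw [Real.sqrt_mul hA, Real.sqrt_mul hB, Real.sqrt_mul hB, Real.sqrt_mul hA]
  ring
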